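/- Let X be a Banach space and let (T_n) ⊂ X × X* be a sequence of maximal monotone operators each of which has convex graph. If T := liminf T_n is maximal monotone, then the sequence of functions (φ_{T_n} + δ_{T_n}) epi-converges to φ_T + δ_T, where φ_S denotes the Fitzpatrick function of S and δ_S the indicator function of S; moreover φ_T + δ_T is a representative function of T. -/

import Mathlib

open Filter Topology
noncomputable section
variable {X : Type*} [NormedAddCommGroup X] [NormedSpace ℝ X]

def pairing (p : X × StrongDual ℝ X) : ℝ := p.2 p.1

def ConvexERealOn {E : Type*} [AddCommGroup E] [Module ℝ E] (f : E → EReal) : Prop :=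
  ∀ x y : E, ∀ a b : ℝ, 0 ≤ a → 0 ≤ b → a + b = 1 →
    f (a • x + b • y) ≤ (a : EReal) * f x + (b : EReal) * f y

def IsGamma {E : Type*} [AddCommGroup E] [Module ℝ E] [TopologicalSpace E] (f : E → EReal) : Prop :=
  LowerSemicontinuous f ∧ ConvexERealOn f ∧ ∀ x, f x ≠ ⊥

def EpiConverges {E : Type*} [TopologicalSpace E] (fs : ℕ → E → EReal) (f : E → EReal) : Prop :=
  ∀ z : E,
    (∃ zs : ℕ → E, Tendsto zs atTop (nhds z) ∧
      Tendsto (fun n => fs n (zs n)) atTop (nhds (f z))) ∧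
    (∀ zs : ℕ → E, Tendsto zs atTop (nhds z) →
      f z ≤ Filter.liminf (fun n => fs n (zs n)) atTop)

def conjFn (f : X × StrongDual ℝ X → EReal) (q : StrongDual ℝ X × X) : EReal :=
  ⨆ p : X × StrongDual ℝ X, (((q.1 p.1 + p.2 q.2 : ℝ) : EReal) - f p)

def Lset (f : X × StrongDual ℝ X → EReal) : Set (X × StrongDual ℝ X) :=
  {p | f p = (pairing p : EReal)}

def MonotoneSet (T : Set (X × StrongDual ℝ X)) : Prop :=
  ∀ p ∈ T, ∀ q ∈ T, 0 ≤ (q.2 - p.2) (q.1 - p.1)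

def MaximalMonotone (T : Set (X × StrongDual ℝ X)) : Prop :=
  MonotoneSet T ∧ ∀ S : Set (X × StrongDual ℝ X), MonotoneSet S → T ⊆ S → S = T

def OpLiminf (Ts : ℕ → Set (X × StrongDual ℝ X)) : Set (X × StrongDual ℝ X) :=
  {p | ∃ zs : ℕ → X × StrongDual ℝ X, (∀ n, zs n ∈ Ts n) ∧ Tendsto zs atTop (nhds p)}

def fitz (T : Set (X × StrongDual ℝ X)) (p : X × StrongDual ℝ X) : EReal :=
  ⨆ q ∈ T, (((p.2 - q.2) (q.1 - p.1) + p.2 p.1 : ℝ) : EReal)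

open Classical in
def indic (T : Set (X × StrongDual ℝ X)) (p : X × StrongDual ℝ X) : EReal :=
  if p ∈ T then 0 else ⊤

def IsRepFunOf (g : X × StrongDual ℝ X → EReal) (T : Set (X × StrongDual ℝ X)) : Prop :=
  IsGamma g ∧ (∀ p, (pairing p : EReal) ≤ g p) ∧ ∀ p, (g p = (pairing p : EReal) ↔ p ∈ T)

def IsReflexive (X : Type*) [NormedAddCommGroup X] [NormedSpace ℝ X] : Prop :=
  Function.Surjective (NormedSpace.inclusionInDoubleDual ℝ X)

def WeakTendstoProd (zs : ℕ → X × StrongDual ℝ X) (z : X × StrongDual ℝ X) : Prop :=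
  (∀ g : StrongDual ℝ X, Tendsto (fun n => g (zs n).1) atTop (nhds (g z.1))) ∧
  (∀ G : StrongDual ℝ (StrongDual ℝ X),
    Tendsto (fun n => G (zs n).2) atTop (nhds (G z.2)))

def MoscoConverges (fs : ℕ → X × StrongDual ℝ X → EReal)
    (f : X × StrongDual ℝ X → EReal) : Prop :=
  ∀ z : X × StrongDual ℝ X,
    (∃ zs : ℕ → X × StrongDual ℝ X, Tendsto zs atTop (nhds z) ∧
      Tendsto (fun n => fs n (zs n)) atTop (nhds (f z))) ∧
    (∀ zs : ℕ → X × StrongDual ℝ X, WeakTendstoProd zs z →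
      f z ≤ Filter.liminf (fun n => fs n (zs n)) atTop)

def Tset (h : X × StrongDual ℝ X → EReal) : Set (X × StrongDual ℝ X) :=
  {p | ((2 * pairing p : ℝ) : EReal) = h p + conjFn h (p.2, p.1)}


section Stmt4Helpers
variable {X : Type*} [NormedAddCommGroup X] [NormedSpace ℝ X]

lemma pairing_continuous' : Continuous (pairing (X := X)) := by
  have h : Continuous fun q : (StrongDual ℝ X) × X => q.1 q.2 :=
    isBoundedBilinearMap_apply.continuous
  exact h.comp continuous_swap

lemma sub_apply_comm' (f g : StrongDual ℝ X) (x y : X) :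
    (f - g) (x - y) = (g - f) (y - x) := by
  simp [ContinuousLinearMap.sub_apply, map_sub]; ring

lemma mem_of_rel' {T : Set (X × StrongDual ℝ X)} (hT : MaximalMonotone T)
    {p : X × StrongDual ℝ X} (h : ∀ q ∈ T, 0 ≤ (q.2 - p.2) (q.1 - p.1)) : p ∈ T := by
  have hmono : MonotoneSet (insert p T) := by
    rintro a (rfl | ha) b (rfl | hb)
    · simp
    · exact h b hb
    · rw [sub_apply_comm']; exact h a ha
    · exact hT.1 a ha b hb
  have := hT.2 _ hmono (Set.subset_insert _ _)
  rw [← this]; exact Set.mem_insert _ _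

lemma maximal_nonempty' {T : Set (X × StrongDual ℝ X)} (hT : MaximalMonotone T) :
    T.Nonempty := by
  rcases Set.eq_empty_or_nonempty T with rfl | h
  · exfalso
    have hmono : MonotoneSet ({((0 : X), (0 : StrongDual ℝ X))} : Set _) := by
      rintro a ha b hb
      simp only [Set.mem_singleton_iff] at ha hb
      subst ha; subst hb; simp
    have := hT.2 _ hmono (Set.empty_subset _)
    simp [Set.eq_empty_iff_forall_notMem] at this
  · exact h

lemma fitz_eq_of_mem' {T : Set (X × StrongDual ℝ X)} (hT : MonotoneSet T)
    {p : X × StrongDual ℝ X} (hp : p ∈ T) : fitz T p = (pairing p : EReal) := by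
  apply le_antisymm
  · apply iSup₂_le
    intro q hq
    have h0 : 0 ≤ (q.2 - p.2) (q.1 - p.1) := hT p hp q hq
    have h1 : (p.2 - q.2) (q.1 - p.1) + p.2 p.1 ≤ pairing p := by
      have h2 : (p.2 - q.2) (q.1 - p.1) = -((q.2 - p.2) (q.1 - p.1)) := by
        simp [ContinuousLinearMap.sub_apply, map_sub]; ring
      unfold pairing; rw [h2]; linarith
    exact EReal.coe_le_coe_iff.mpr h1
  · have h := le_iSup₂ (f := fun q (_ : q ∈ T) =>
      (((p.2 - q.2) (q.1 - p.1) + p.2 p.1 : ℝ) : EReal)) p hp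
    have h3 : ((p.2 - p.2) (p.1 - p.1) + p.2 p.1 : ℝ) = pairing p := by simp [pairing]
    rw [h3] at h
    exact h

lemma fitz_ne_bot' {T : Set (X × StrongDual ℝ X)} (hne : T.Nonempty)
    (p : X × StrongDual ℝ X) : fitz T p ≠ ⊥ := by
  obtain ⟨q, hq⟩ := hne
  have h := le_iSup₂ (f := fun q (_ : q ∈ T) =>
      (((p.2 - q.2) (q.1 - p.1) + p.2 p.1 : ℝ) : EReal)) q hq
  exact ((EReal.bot_lt_coe _).trans_le h).ne'

lemma fval_mem' {T : Set (X × StrongDual ℝ X)} (hT : MonotoneSet T)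
    {p : X × StrongDual ℝ X} (hp : p ∈ T) :
    fitz T p + indic T p = (pairing p : EReal) := by
  rw [fitz_eq_of_mem' hT hp]
  simp [indic, hp]

lemma fval_not' {T : Set (X × StrongDual ℝ X)} (hne : T.Nonempty)
    {p : X × StrongDual ℝ X} (hp : p ∉ T) :
    fitz T p + indic T p = ⊤ := by
  have h : indic T p = ⊤ := by simp [indic, hp]
  rw [h, EReal.add_top_of_ne_bot (fitz_ne_bot' hne p)]

lemma rel_continuous' :
    Continuous fun r : (X × StrongDual ℝ X) × (X × StrongDual ℝ X) =>
      (r.1.2 - r.2.2) (r.1.1 - r.2.1) := by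
  have h2 : Continuous fun r : (X × StrongDual ℝ X) × (X × StrongDual ℝ X) =>
      ((r.1.2 - r.2.2 : StrongDual ℝ X), (r.1.1 - r.2.1 : X)) :=
    (continuous_fst.snd.sub continuous_snd.snd).prodMk (continuous_fst.fst.sub continuous_snd.fst)
  exact isBoundedBilinearMap_apply.continuous.comp h2

lemma mem_of_frequently' {Ts : ℕ → Set (X × StrongDual ℝ X)}
    (hmono : ∀ n, MonotoneSet (Ts n)) (hTmax : MaximalMonotone (OpLiminf Ts))
    {zs : ℕ → X × StrongDual ℝ X} {z : X × StrongDual ℝ X}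
    (hz : Tendsto zs atTop (nhds z))
    (hfreq : ∃ᶠ n in atTop, zs n ∈ Ts n) : z ∈ OpLiminf Ts := by
  apply mem_of_rel' hTmax
  intro q hq
  obtain ⟨qs, hqs, hqt⟩ := hq
  have hcont : Tendsto (fun n => ((zs n).2 - (qs n).2) ((zs n).1 - (qs n).1)) atTop
      (nhds ((z.2 - q.2) (z.1 - q.1))) :=
    (rel_continuous'.tendsto _).comp (hz.prodMk_nhds hqt)
  have key : (0:ℝ) ≤ (z.2 - q.2) (z.1 - q.1) := by
    by_contra hlt
    push_neg at hlt
    have hev : ∀ᶠ n in atTop, ((zs n).2 - (qs n).2) ((zs n).1 - (qs n).1) < 0 :=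
      hcont.eventually_lt_const hlt
    have hfreq2 : ∃ᶠ n in atTop, 0 ≤ ((zs n).2 - (qs n).2) ((zs n).1 - (qs n).1) :=
      hfreq.mono fun n hn => hmono n (qs n) (hqs n) (zs n) hn
    obtain ⟨n, h1, h2⟩ := (hfreq2.and_eventually hev).exists
    linarith
  have heq : (q.2 - z.2) (q.1 - z.1) = (z.2 - q.2) (z.1 - q.1) := by
    simp [ContinuousLinearMap.sub_apply, map_sub]; ring
  rw [heq]; exact key

lemma opliminf_closed' {Ts : ℕ → Set (X × StrongDual ℝ X)}
    (hTmax : MaximalMonotone (OpLiminf Ts)) : IsClosed (OpLiminf Ts) := by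
  apply isClosed_of_closure_subset
  intro z hz
  apply mem_of_rel' hTmax
  intro q hq
  have hc : IsClosed {p : X × StrongDual ℝ X | 0 ≤ (q.2 - p.2) (q.1 - p.1)} := by
    have hcont : Continuous fun p : X × StrongDual ℝ X => (q.2 - p.2) (q.1 - p.1) :=
      rel_continuous'.comp (continuous_const.prodMk continuous_id)
    exact isClosed_le continuous_const hcont
  exact hc.closure_subset_iff.mpr (fun p hp => hTmax.1 p hp q hq) hz

lemma opliminf_convex' {Ts : ℕ → Set (X × StrongDual ℝ X)}
    (hconv : ∀ n, Convex ℝ (Ts n)) : Convex ℝ (OpLiminf Ts) := by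
  rintro p ⟨ps, hps, hpt⟩ q ⟨qs, hqs, hqt⟩ a b ha hb hab
  exact ⟨fun n => a • ps n + b • qs n, fun n => hconv n (hps n) (hqs n) ha hb hab,
    (hpt.const_smul a).add (hqt.const_smul b)⟩

lemma pairing_convex_ineq' {p q : X × StrongDual ℝ X}
    (h : 0 ≤ (q.2 - p.2) (q.1 - p.1)) {a b : ℝ} (ha : 0 ≤ a) (hb : 0 ≤ b) (hab : a + b = 1) :
    pairing (a • p + b • q) ≤ a * pairing p + b * pairing q := by
  have hexp : pairing (a • p + b • q) =
      a*a * (p.2 p.1) + a*b * (p.2 q.1) + a*b*(q.2 p.1) + b*b*(q.2 q.1) := by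
    simp [pairing, Prod.smul_fst, Prod.smul_snd, ContinuousLinearMap.add_apply,
      ContinuousLinearMap.smul_apply, map_add, map_smul, smul_eq_mul]
    ring
  have hh : 0 ≤ q.2 q.1 - q.2 p.1 - p.2 q.1 + p.2 p.1 := by
    have h5 : (q.2 - p.2) (q.1 - p.1) = q.2 q.1 - q.2 p.1 - p.2 q.1 + p.2 p.1 := by
      simp [ContinuousLinearMap.sub_apply, map_sub]; ring
    linarith [h5 ▸ h]
  have key : a * pairing p + b * pairing q -
      (a*a * (p.2 p.1) + a*b * (p.2 q.1) + a*b*(q.2 p.1) + b*b*(q.2 q.1)) =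
      a*b*(q.2 q.1 - q.2 p.1 - p.2 q.1 + p.2 p.1) := by
    have hb' : b = 1 - a := by linarith
    unfold pairing; rw [hb']; ring
  have hnn : 0 ≤ a*b*(q.2 q.1 - q.2 p.1 - p.2 q.1 + p.2 p.1) :=
    mul_nonneg (mul_nonneg ha hb) hh
  rw [hexp]
  linarith

end Stmt4Helpers

/-- For maximal monotone operators with convex graph whose liminf `T` is
maximal monotone, `(φ_{T_n} + δ_{T_n})` epi-converges to `φ_T + δ_T`, a representative
function of `T`. -/
theorem stmt4 [CompleteSpace X]
    (Ts : ℕ → Set (X × StrongDual ℝ X))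
    (hmax : ∀ n, MaximalMonotone (Ts n))
    (hconv : ∀ n, Convex ℝ (Ts n))
    (hTmax : MaximalMonotone (OpLiminf Ts)) :
    EpiConverges (fun n p => fitz (Ts n) p + indic (Ts n) p)
      (fun p => fitz (OpLiminf Ts) p + indic (OpLiminf Ts) p) ∧
    IsRepFunOf (fun p => fitz (OpLiminf Ts) p + indic (OpLiminf Ts) p) (OpLiminf Ts) := by
  have hmono : ∀ n, MonotoneSet (Ts n) := fun n => (hmax n).1
  have hne : ∀ n, (Ts n).Nonempty := fun n => maximal_nonempty' (hmax n)
  have hTne : (OpLiminf Ts).Nonempty := maximal_nonempty' hTmax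
  have hclosed : IsClosed (OpLiminf Ts) := opliminf_closed' hTmax
  have hTconv : Convex ℝ (OpLiminf Ts) := opliminf_convex' hconv
  have hge : ∀ p, (pairing p : EReal) ≤ fitz (OpLiminf Ts) p + indic (OpLiminf Ts) p := by
    intro p
    by_cases hp : p ∈ OpLiminf Ts
    · rw [fval_mem' hTmax.1 hp]
    · rw [fval_not' hTne hp]; exact le_top
  constructor
  · intro z
    by_cases hz : z ∈ OpLiminf Ts
    · constructor
      · obtain ⟨zs, hzs, hzt⟩ := hz
        have hz' : z ∈ OpLiminf Ts := ⟨zs, hzs, hzt⟩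
        refine ⟨zs, hzt, ?_⟩
        beta_reduce
        have heq : ∀ n, fitz (Ts n) (zs n) + indic (Ts n) (zs n)
            = ((pairing (zs n) : ℝ) : EReal) := fun n => fval_mem' (hmono n) (hzs n)
        rw [fval_mem' hTmax.1 hz', tendsto_congr heq]
        exact EReal.tendsto_coe.mpr ((pairing_continuous'.tendsto z).comp hzt)
      · intro zs hzs
        beta_reduce
        have h1 : ∀ n, ((pairing (zs n) : ℝ) : EReal)
            ≤ fitz (Ts n) (zs n) + indic (Ts n) (zs n) := by
          intro n
          by_cases hn : zs n ∈ Ts n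
          · rw [fval_mem' (hmono n) hn]
          · rw [fval_not' (hne n) hn]; exact le_top
        have h2 : Filter.liminf (fun n => ((pairing (zs n) : ℝ) : EReal)) atTop
            = ((pairing z : ℝ) : EReal) :=
          (EReal.tendsto_coe.mpr ((pairing_continuous'.tendsto z).comp hzs)).liminf_eq
        calc fitz (OpLiminf Ts) z + indic (OpLiminf Ts) z
            = ((pairing z : ℝ) : EReal) := fval_mem' hTmax.1 hz
          _ = _ := h2.symm
          _ ≤ _ := Filter.liminf_le_liminf (Filter.Eventually.of_forall h1)
    · have hev : ∀ zs : ℕ → X × StrongDual ℝ X, Tendsto zs atTop (nhds z) →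
          ∀ᶠ n in atTop, zs n ∉ Ts n := by
        intro zs hzs
        by_contra hc
        rw [Filter.not_eventually] at hc
        exact hz (mem_of_frequently' hmono hTmax hzs (hc.mono fun n hn => not_not.mp hn))
      constructor
      · refine ⟨fun _ => z, tendsto_const_nhds, ?_⟩
        beta_reduce
        rw [fval_not' hTne hz]
        have heq : (fun n => fitz (Ts n) z + indic (Ts n) z) =ᶠ[atTop] fun _ => (⊤ : EReal) :=
          (hev _ tendsto_const_nhds).mono fun n hn => fval_not' (hne n) hn
        exact Tendsto.congr' heq.symm tendsto_const_nhds
      · intro zs hzs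
        beta_reduce
        have heq : (fun n => fitz (Ts n) (zs n) + indic (Ts n) (zs n)) =ᶠ[atTop]
            fun _ => (⊤ : EReal) :=
          (hev zs hzs).mono fun n hn => fval_not' (hne n) hn
        rw [fval_not' hTne hz, Filter.liminf_congr heq, Filter.liminf_const]
  · refine ⟨⟨?_, ?_, ?_⟩, hge, ?_⟩
    · intro p y hy
      beta_reduce at hy
      by_cases hp : p ∈ OpLiminf Ts
      · rw [fval_mem' hTmax.1 hp] at hy
        have hcont : ContinuousAt
            (fun x : X × StrongDual ℝ X => ((pairing x : ℝ) : EReal)) p :=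
          (continuous_coe_real_ereal.comp pairing_continuous').continuousAt
        filter_upwards [hcont.eventually_mem (Ioi_mem_nhds hy)] with x hx
        exact lt_of_lt_of_le hx (hge x)
      · rw [fval_not' hTne hp] at hy
        filter_upwards [hclosed.isOpen_compl.mem_nhds hp] with x hx
        rw [fval_not' hTne hx]
        exact hy
    · intro p q a b ha hb hab
      beta_reduce
      rcases eq_or_lt_of_le ha with rfl | ha'
      · have hb1 : b = 1 := by linarith
        subst hb1
        simp only [zero_smul, zero_add, one_smul, EReal.coe_zero, EReal.coe_one,
          zero_mul, one_mul]
        exact le_refl _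
      rcases eq_or_lt_of_le hb with rfl | hb'
      · have ha1 : a = 1 := by linarith
        subst ha1
        simp only [zero_smul, add_zero, one_smul, EReal.coe_zero, EReal.coe_one,
          zero_mul, one_mul]
        exact le_refl _
      by_cases hp : p ∈ OpLiminf Ts
      · by_cases hq : q ∈ OpLiminf Ts
        · have hmem : a • p + b • q ∈ OpLiminf Ts := hTconv hp hq ha hb hab
          rw [fval_mem' hTmax.1 hmem, fval_mem' hTmax.1 hp, fval_mem' hTmax.1 hq,
            ← EReal.coe_mul, ← EReal.coe_mul, ← EReal.coe_add]
          exact EReal.coe_le_coe_iff.mpr (pairing_convex_ineq' (hTmax.1 p hp q hq) ha hb hab)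
        · rw [fval_not' hTne hq, EReal.coe_mul_top_of_pos hb', fval_mem' hTmax.1 hp,
            ← EReal.coe_mul, EReal.add_top_of_ne_bot (EReal.coe_ne_bot _)]
          exact le_top
      · have hbot : (b : EReal) * (fitz (OpLiminf Ts) q + indic (OpLiminf Ts) q) ≠ ⊥ := by
          by_cases hq : q ∈ OpLiminf Ts
          · rw [fval_mem' hTmax.1 hq, ← EReal.coe_mul]; exact EReal.coe_ne_bot _
          · rw [fval_not' hTne hq, EReal.coe_mul_top_of_pos hb']
            exact (bot_lt_top (α := EReal)).ne'
        rw [fval_not' hTne hp, EReal.coe_mul_top_of_pos ha', EReal.top_add_of_ne_bot hbot]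
        exact le_top
    · intro p
      beta_reduce
      by_cases hp : p ∈ OpLiminf Ts
      · rw [fval_mem' hTmax.1 hp]; exact EReal.coe_ne_bot _
      · rw [fval_not' hTne hp]; exact (bot_lt_top (α := EReal)).ne'
    · intro p
      beta_reduce
      constructor
      · intro h
        by_contra hp
        rw [fval_not' hTne hp] at h
        exact EReal.coe_ne_top _ h.symm
      · exact fun hp => fval_mem' hTmax.1 hp
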